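/- Let [b,i] and [b',i] be intervals in the homology or boundary barcode of F_i with b ≺ b' and b' < b, and let W, W' be wire bundles generating representatives for them. Assume W̄ = {w_j ∈ W | j < b} is a boundary bundle alive till b. Then for each α with b' ≤ α < b, the cycle at index α generated by W ⊞ W' is homologous in K_α to the cycle z'_α of the representative generated by W', and consequently W ⊞ W' generates a representative for [b',i]. -/

import Mathlib

/-- A simplex is a finite set of (natural-number) vertices. -/
abbrev Simplex : Type := Finset ℕ

/-- A chain over ℤ/2 (all degrees together) is a finitely supported
function from simplices to ℤ/2. -/
abbrev Chain : Type := Simplex →₀ ZMod 2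

/-- A (finite) simplicial complex: a finite set of simplices closed under faces. -/
def IsComplex (K : Finset Simplex) : Prop := ∀ s ∈ K, ∀ t ⊆ s, t ∈ K

/-- Boundary of a single simplex over ℤ/2. -/
noncomputable def bdrySimplex (s : Simplex) : Chain :=
  ∑ x ∈ s, Finsupp.single (s.erase x) 1

/-- The boundary operator on chains (all degrees), over ℤ/2. -/
noncomputable def bdry : Chain →ₗ[ZMod 2] Chain :=
  Finsupp.lsum (ZMod 2) fun s => LinearMap.toSpanSingleton (ZMod 2) Chain (bdrySimplex s)

/-- The chain group of a complex `K`: chains supported on `K`. -/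
noncomputable def chainsOf (K : Finset Simplex) : Submodule (ZMod 2) Chain :=
  Finsupp.supported (ZMod 2) (ZMod 2) (↑K : Set Simplex)

/-- The cycle group `Z(K)` (all degrees). -/
noncomputable def cyclesOf (K : Finset Simplex) : Submodule (ZMod 2) Chain :=
  chainsOf K ⊓ LinearMap.ker bdry

/-- The boundary group `B(K)` (all degrees). -/
noncomputable def bdriesOf (K : Finset Simplex) : Submodule (ZMod 2) Chain :=
  Submodule.map bdry (chainsOf K)

theorem chainsOf_mono {K K' : Finset Simplex} (h : K ⊆ K') : chainsOf K ≤ chainsOf K' :=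
  Finsupp.supported_mono (by exact_mod_cast h)

theorem cyclesOf_mono {K K' : Finset Simplex} (h : K ⊆ K') : cyclesOf K ≤ cyclesOf K' :=
  inf_le_inf_right _ (chainsOf_mono h)

theorem bdriesOf_mono {K K' : Finset Simplex} (h : K ⊆ K') : bdriesOf K ≤ bdriesOf K' :=
  Submodule.map_mono (chainsOf_mono h)

/-- `B(K)` viewed inside `Z(K)`. -/
noncomputable def homologyRel (K : Finset Simplex) : Submodule (ZMod 2) (cyclesOf K) :=
  (bdriesOf K).comap (cyclesOf K).subtype

/-- The homology `H(K) = Z(K)/B(K)` over ℤ/2, all degrees summed. -/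
noncomputable abbrev homology (K : Finset Simplex) :=
  cyclesOf K ⧸ homologyRel K

/-- The inclusion-induced map on homology. -/
noncomputable def inducedH {K K' : Finset Simplex} (h : K ⊆ K') :
    homology K →ₗ[ZMod 2] homology K' :=
  Submodule.mapQ _ _ (Submodule.inclusion (cyclesOf_mono h)) (by
    intro x hx
    simp only [homologyRel, Submodule.mem_comap, Submodule.coe_subtype,
      Submodule.coe_inclusion] at hx ⊢
    exact bdriesOf_mono h hx)

open Classical in
/-- The homology class of a chain (zero if the chain is not a cycle of `K`). -/
noncomputable def hclass (K : Finset Simplex) (c : Chain) : homology K :=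
  if h : c ∈ cyclesOf K then Submodule.Quotient.mk ⟨c, h⟩ else 0

/-- A simplex-wise zigzag filtration of length `m` starting at the empty complex:
each arrow inserts or deletes exactly one simplex. -/
structure ZZ (m : ℕ) where
  K : ℕ → Finset Simplex
  cpx : ∀ j, IsComplex (K j)
  empty0 : K 0 = ∅
  step : ∀ j < m, (∃ σ, σ ∉ K j ∧ K (j+1) = insert σ (K j)) ∨
                  (∃ σ, σ ∉ K (j+1) ∧ K j = insert σ (K (j+1)))

/-- Homology representative for the interval `[b,d]` of the zigzag module of `F_i`
(Definition of homology representatives). -/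
def IsHRep {m : ℕ} (F : ZZ m) (i b d : ℕ) (z : ℕ → Chain) : Prop :=
  1 ≤ b ∧ b ≤ d ∧ d ≤ i ∧ i ≤ m ∧
  (∀ α, b ≤ α → α ≤ d → z α ∈ cyclesOf (F.K α)) ∧
  (∀ α, b ≤ α → α < d →
    (F.K α ⊆ F.K (α+1) → z α + z (α+1) ∈ bdriesOf (F.K (α+1))) ∧
    (F.K (α+1) ⊆ F.K α → z α + z (α+1) ∈ bdriesOf (F.K α))) ∧
  ((F.K (b-1) ⊆ F.K b → z b ∉ cyclesOf (F.K (b-1))) ∧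
   (F.K b ⊆ F.K (b-1) → z b ∈ bdriesOf (F.K (b-1)) ∧ z b ∉ bdriesOf (F.K b))) ∧
  (d < i →
    (F.K (d+1) ⊆ F.K d → z d ∉ cyclesOf (F.K (d+1))) ∧
    (F.K d ⊆ F.K (d+1) → z d ∈ bdriesOf (F.K (d+1)) ∧ z d ∉ bdriesOf (F.K d)))

/-- Boundary representative for the interval `[b,d]` of the boundary zigzag module of `F_i`. -/
def IsBRep {m : ℕ} (F : ZZ m) (i b d : ℕ) (z : ℕ → Chain) : Prop :=
  1 ≤ b ∧ b ≤ d ∧ d ≤ i ∧ i ≤ m ∧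
  (∀ α, b ≤ α → α ≤ d → z α ∈ bdriesOf (F.K α)) ∧
  (∀ α, b ≤ α → α < d → z (α+1) = z α) ∧
  (F.K (b-1) ⊆ F.K b ∧ z b ∉ bdriesOf (F.K (b-1))) ∧
  (d < i → F.K (d+1) ⊆ F.K d ∧ z d ∉ bdriesOf (F.K (d+1)))

/-- `j ∈ P^H(F_i)`: homology birth index. -/
def HBirthAt {m : ℕ} (F : ZZ m) (i j : ℕ) : Prop :=
  1 ≤ j ∧ j ≤ i ∧ i ≤ m ∧
  ((∃ h : F.K (j-1) ⊆ F.K j, Function.Injective (inducedH h)) ∨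
   (∃ h : F.K j ⊆ F.K (j-1), Function.Surjective (inducedH h)))

/-- `j ∈ P^B(F_i)`: boundary birth index. -/
def BBirthAt {m : ℕ} (F : ZZ m) (i j : ℕ) : Prop :=
  1 ≤ j ∧ j ≤ i ∧ i ≤ m ∧ F.K (j-1) ⊆ F.K j ∧ bdriesOf (F.K (j-1)) ≠ bdriesOf (F.K j)

/-- `j ∈ N^H(F_i)` for `j < i` (the arrow at `j` kills a homology class). -/
def HDeathAt {m : ℕ} (F : ZZ m) (i j : ℕ) : Prop :=
  j < i ∧ i ≤ m ∧
  ((∃ h : F.K j ⊆ F.K (j+1), ¬ Function.Injective (inducedH h)) ∨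
   (∃ h : F.K (j+1) ⊆ F.K j, ¬ Function.Surjective (inducedH h)))

/-- `j ∈ N^B(F_i)` for `j < i` (the arrow at `j` kills a boundary class). -/
def BDeathAt {m : ℕ} (F : ZZ m) (i j : ℕ) : Prop :=
  j < i ∧ i ≤ m ∧
  ∃ _ : F.K (j+1) ⊆ F.K j, bdriesOf (F.K (j+1)) ≠ bdriesOf (F.K j)

/-- The total order `≺` on birth indices (Definition of the total order). -/
def Prec {m : ℕ} (F : ZZ m) (i b b' : ℕ) : Prop :=
  (BBirthAt F i b ∧ HBirthAt F i b') ∨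
  (BBirthAt F i b ∧ BBirthAt F i b' ∧ b < b') ∨
  (HBirthAt F i b ∧ HBirthAt F i b' ∧ b < b' ∧ F.K (b'-1) ⊆ F.K b') ∨
  (HBirthAt F i b ∧ HBirthAt F i b' ∧ b' < b ∧ F.K b ⊆ F.K (b-1))

/-- A wire at index `i` (Definition of wires). -/
def IsWire {m : ℕ} (F : ZZ m) (i : ℕ) (c : Chain) : Prop :=
  1 ≤ i ∧ i ≤ m ∧ c ∈ cyclesOf (F.K i) ∧
  ((F.K (i-1) ⊆ F.K i ∧ c ∉ cyclesOf (F.K (i-1))) ∨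
   (F.K i ⊆ F.K (i-1) ∧ c ∈ bdriesOf (F.K (i-1)) ∧ c ∉ bdriesOf (F.K i)) ∨
   (F.K (i-1) ⊆ F.K i ∧ c ∈ bdriesOf (F.K i) ∧ c ∉ bdriesOf (F.K (i-1))))

/-- Partial sum of the wires in the bundle `W` whose starting index is `≤ α`. -/
noncomputable def psum (w : ℕ → Chain) (W : Finset ℕ) (α : ℕ) : Chain :=
  ∑ j ∈ W.filter (· ≤ α), w j

/-- A boundary bundle `W` (with wires `w`) alive till index `b`. -/
def AliveTill {m : ℕ} (F : ZZ m) (w : ℕ → Chain) (W : Finset ℕ) (b : ℕ) : Prop :=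
  ∀ α ≤ b, psum w W α ∈ bdriesOf (F.K α)

/-- `S` (with representatives `z`) is the homology barcode `Pers^H(F_i)`:
each interval carries a representative and, at every index `j`, the classes of the
representative cycles of the intervals containing `j` form a basis of `H(K_j)`. -/
def IsHBarcode {m : ℕ} (F : ZZ m) (i : ℕ) (S : Finset (ℕ × ℕ))
    (z : ℕ × ℕ → ℕ → Chain) : Prop :=
  (∀ q ∈ S, IsHRep F i q.1 q.2 (z q)) ∧
  ∀ j ≤ i,
    LinearIndependent (ZMod 2)
      (fun q : {q : ℕ × ℕ // q ∈ S ∧ q.1 ≤ j ∧ j ≤ q.2} => hclass (F.K j) (z q.val j)) ∧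
    Submodule.span (ZMod 2)
      (Set.range (fun q : {q : ℕ × ℕ // q ∈ S ∧ q.1 ≤ j ∧ j ≤ q.2} =>
        hclass (F.K j) (z q.val j))) = ⊤

/-- `S` (with representatives `z`) is the boundary barcode `Pers^B(F_i)`. -/
def IsBBarcode {m : ℕ} (F : ZZ m) (i : ℕ) (S : Finset (ℕ × ℕ))
    (z : ℕ × ℕ → ℕ → Chain) : Prop :=
  (∀ q ∈ S, IsBRep F i q.1 q.2 (z q)) ∧
  ∀ j ≤ i,
    LinearIndependent (ZMod 2)
      (fun q : {q : ℕ × ℕ // q ∈ S ∧ q.1 ≤ j ∧ j ≤ q.2} => z q.val j) ∧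
    Submodule.span (ZMod 2)
      (Set.range (fun q : {q : ℕ × ℕ // q ∈ S ∧ q.1 ≤ j ∧ j ≤ q.2} =>
        z q.val j)) = bdriesOf (F.K j)



-- AUX LEMMAS
lemma chain_add_self (c : Chain) : c + c = 0 := by
  ext s
  simp only [Finsupp.add_apply, Finsupp.coe_zero, Pi.zero_apply]
  generalize c s = x; revert x; decide

lemma bdry_single (s : Simplex) (a : ZMod 2) :
    bdry (Finsupp.single s a) = a • bdrySimplex s := by
  simp [bdry, Finsupp.lsum_single, LinearMap.toSpanSingleton_apply]

lemma bdry_bdrySimplex (s : Simplex) : bdry (bdrySimplex s) = 0 := by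
  unfold bdrySimplex
  rw [map_sum]
  simp only [bdry_single, one_smul]
  simp only [bdrySimplex]
  rw [Finset.sum_sigma']
  refine Finset.sum_involution (fun p _ => ⟨p.2, p.1⟩) ?_ ?_ ?_ ?_
  · intro a ha
    have h1 : a.1 ∈ s ∧ a.2 ∈ s.erase a.1 := Finset.mem_sigma.1 ha
    have : (s.erase a.1).erase a.2 = (s.erase a.2).erase a.1 :=
      Finset.erase_right_comm
    rw [this]; exact chain_add_self _
  · intro a ha _
    have h1 : a.2 ∈ s.erase a.1 := (Finset.mem_sigma.1 ha).2
    have hne : a.2 ≠ a.1 := Finset.ne_of_mem_erase h1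
    intro h
    exact hne (congrArg Sigma.fst h)
  · intro a ha
    have h1 : a.1 ∈ s ∧ a.2 ∈ s.erase a.1 := Finset.mem_sigma.1 ha
    have h2 : a.2 ∈ s := Finset.mem_of_mem_erase h1.2
    have hne : a.2 ≠ a.1 := Finset.ne_of_mem_erase h1.2
    simp [Finset.mem_sigma, h2, Finset.mem_erase, hne.symm, h1.1]
  · intro a ha; rfl

lemma bdry_bdry (c : Chain) : bdry (bdry c) = 0 := by
  induction c using Finsupp.induction_linear with
  | zero => simp
  | add f g hf hg => rw [map_add, map_add, hf, hg, add_zero]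
  | single s a => rw [bdry_single, map_smul, bdry_bdrySimplex, smul_zero]

lemma bdrySimplex_mem_chainsOf {K : Finset Simplex} (hK : IsComplex K) {s : Simplex}
    (hs : s ∈ K) : bdrySimplex s ∈ chainsOf K := by
  unfold bdrySimplex
  refine Submodule.sum_mem _ fun x hx => ?_
  exact Finsupp.single_mem_supported (ZMod 2) 1 (by exact_mod_cast hK s hs _ (Finset.erase_subset _ _))

lemma bdry_mem_chainsOf {K : Finset Simplex} (hK : IsComplex K) {c : Chain}
    (hc : c ∈ chainsOf K) : bdry c ∈ chainsOf K := by
  rw [chainsOf, Finsupp.supported_eq_span_single] at hc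
  induction hc using Submodule.span_induction with
  | mem x hx =>
      obtain ⟨s, hs, rfl⟩ := hx
      rw [bdry_single, one_smul]
      exact bdrySimplex_mem_chainsOf hK hs
  | zero => rw [map_zero]; exact Submodule.zero_mem _
  | add x y _ _ hx hy => rw [map_add]; exact Submodule.add_mem _ hx hy
  | smul a x _ hx => rw [map_smul]; exact Submodule.smul_mem _ _ hx

lemma bdriesOf_le_cyclesOf {K : Finset Simplex} (hK : IsComplex K) :
    bdriesOf K ≤ cyclesOf K := by
  rintro x ⟨c, hc, rfl⟩
  exact ⟨bdry_mem_chainsOf hK hc, by simp [LinearMap.mem_ker, bdry_bdry]⟩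

lemma coeff_zero_of_mem_chainsOf {K : Finset Simplex} {c : Chain} {σ : Simplex}
    (hσ : σ ∉ K) (hc : c ∈ chainsOf K) : c σ = 0 :=
  (Finsupp.mem_supported' (ZMod 2) c).1 hc σ (by exact_mod_cast hσ)

lemma mem_chainsOf_of_coeff_zero {K : Finset Simplex} {σ : Simplex} {c : Chain}
    (hc : c ∈ chainsOf (insert σ K)) (h0 : c σ = 0) : c ∈ chainsOf K := by
  rw [chainsOf, Finsupp.mem_supported] at hc ⊢
  intro x hx
  have hxK : x ∈ (insert σ K : Finset Simplex) := by exact_mod_cast hc hx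
  have hxσ : x ≠ σ := by
    rintro rfl
    exact (Finsupp.mem_support_iff.1 hx) h0
  simpa [Finset.mem_insert, hxσ] using hxK


lemma erase_mem_chainsOf {K : Finset Simplex} {σ : Simplex} {c : Chain}
    (hc : c ∈ chainsOf (insert σ K)) : Finsupp.erase σ c ∈ chainsOf K := by
  rw [chainsOf, Finsupp.mem_supported] at hc ⊢
  intro x hx
  rw [Finsupp.support_erase] at hx
  have hxσ : x ≠ σ := Finset.ne_of_mem_erase hx
  have : x ∈ (insert σ K : Finset Simplex) := by
    exact_mod_cast hc (Finset.mem_of_mem_erase hx)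
  simpa [Finset.mem_insert, hxσ] using this

lemma bdry_insert_decomp {σ : Simplex} (c : Chain) :
    bdry c = bdry (Finsupp.erase σ c) + (c σ) • bdrySimplex σ := by
  conv_lhs => rw [← Finsupp.erase_add_single σ c]
  rw [map_add, bdry_single]

/-- In a complex with `σ` inserted, no boundary has a `σ`-coefficient. -/
lemma bdry_coeff_zero {K : Finset Simplex} (hK : IsComplex K) {σ : Simplex}
    (hσ : σ ∉ K) {c : Chain} (hc : c ∈ chainsOf (insert σ K)) : (bdry c) σ = 0 := by
  -- first: for chains of K
  have key : ∀ d : Chain, d ∈ chainsOf K → (bdry d) σ = 0 := by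
    intro d hd
    rw [chainsOf, Finsupp.supported_eq_span_single] at hd
    induction hd using Submodule.span_induction with
    | mem x hx =>
        obtain ⟨s, hs, rfl⟩ := hx
        rw [bdry_single, one_smul]
        unfold bdrySimplex
        rw [Finsupp.finset_sum_apply]
        refine Finset.sum_eq_zero fun x hx => ?_
        rw [Finsupp.single_apply, if_neg]
        rintro rfl
        exact hσ (hK s hs _ (Finset.erase_subset _ _))
    | zero => simp
    | add x y _ _ hx hy => rw [map_add, Finsupp.add_apply, hx, hy, add_zero]
    | smul a x _ hx => rw [map_smul, Finsupp.smul_apply, hx, smul_zero]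
  rw [bdry_insert_decomp (σ := σ) c, Finsupp.add_apply,
    key _ (erase_mem_chainsOf hc), Finsupp.smul_apply, zero_add]
  have : (bdrySimplex σ) σ = 0 := by
    unfold bdrySimplex
    rw [Finsupp.finset_sum_apply]
    refine Finset.sum_eq_zero fun x hx => ?_
    rw [Finsupp.single_apply, if_neg]
    intro h
    exact absurd ((Finset.erase_eq_self).1 h) (by simp [hx])
  rw [this, smul_zero]

lemma bdries_coeff_zero {K : Finset Simplex} (hK : IsComplex K) {σ : Simplex}
    (hσ : σ ∉ K) {x : Chain} (hx : x ∈ bdriesOf (insert σ K)) : x σ = 0 := by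
  obtain ⟨c, hc, rfl⟩ := hx
  exact bdry_coeff_zero hK hσ hc

lemma mem_cyclesOf_of_coeff_zero {K : Finset Simplex} {σ : Simplex} {z : Chain}
    (hz : z ∈ cyclesOf (insert σ K)) (h0 : z σ = 0) : z ∈ cyclesOf K :=
  ⟨mem_chainsOf_of_coeff_zero hz.1 h0, hz.2⟩

/-- If `∂σ` is not a boundary of `K`, cycles don't grow when inserting `σ`. -/
lemma cycles_insert_eq {K : Finset Simplex} {σ : Simplex}
    (hB : bdrySimplex σ ∉ bdriesOf K) {z : Chain}
    (hz : z ∈ cyclesOf (insert σ K)) : z ∈ cyclesOf K := by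
  refine mem_cyclesOf_of_coeff_zero hz ?_
  by_contra h
  have h1 : z σ = 1 := by
    revert h; generalize z σ = x; revert x; decide
  have hb : bdry z = 0 := by simpa [LinearMap.mem_ker] using hz.2
  rw [bdry_insert_decomp (σ := σ) z, h1, one_smul] at hb
  have : bdrySimplex σ = bdry (Finsupp.erase σ z) := by
    have := congrArg (· + bdrySimplex σ) hb
    simpa [add_assoc, chain_add_self] using this.symm
  exact hB (this ▸ ⟨_, erase_mem_chainsOf hz.1, rfl⟩)

/-- If `∂σ` is a boundary of `K`, boundaries don't grow when inserting `σ`. -/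
lemma bdries_insert_le {K : Finset Simplex} {σ : Simplex}
    (hB : bdrySimplex σ ∈ bdriesOf K) : bdriesOf (insert σ K) ≤ bdriesOf K := by
  rintro x ⟨c, hc, rfl⟩
  rw [bdry_insert_decomp (σ := σ) c]
  exact Submodule.add_mem _ ⟨_, erase_mem_chainsOf hc, rfl⟩ (Submodule.smul_mem _ _ hB)

/-- Extraction of a forward step as an insertion. -/
lemma step_insert {m : ℕ} (F : ZZ m) {j : ℕ} (hj : j < m) (hsub : F.K j ⊆ F.K (j+1)) :
    ∃ σ ∉ F.K j, F.K (j+1) = insert σ (F.K j) := by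
  rcases F.step j hj with ⟨σ, hσ, he⟩ | ⟨σ, hσ, he⟩
  · exact ⟨σ, hσ, he⟩
  · exact absurd (hsub (he ▸ Finset.mem_insert_self σ _)) hσ

lemma psum_filter_lt (w : ℕ → Chain) (W : Finset ℕ) {α b : ℕ} (h : α < b) :
    psum w W α = psum w (W.filter (· < b)) α := by
  unfold psum
  rw [Finset.filter_filter]
  congr 1
  ext j
  simp only [Finset.mem_filter, and_assoc]
  exact ⟨fun ⟨hj, hle⟩ => ⟨hj, by omega, hle⟩, fun ⟨hj, _, hle⟩ => ⟨hj, hle⟩⟩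

lemma psum_symmDiff (w : ℕ → Chain) (W W' : Finset ℕ) (α : ℕ) :
    psum w (symmDiff W W') α = psum w W α + psum w W' α := by
  classical
  unfold psum
  have hf : (symmDiff W W').filter (· ≤ α) =
      symmDiff (W.filter (· ≤ α)) (W'.filter (· ≤ α)) := by
    ext j
    simp only [Finset.mem_filter, Finset.mem_symmDiff]
    tauto
  rw [hf]
  set A := W.filter (· ≤ α)
  set B := W'.filter (· ≤ α)
  have h1 : symmDiff A B = (A ∪ B) \ (A ∩ B) := by
    rw [symmDiff_eq_sup_sdiff_inf]; rfl
  have h2 : (∑ j ∈ symmDiff A B, w j) + ∑ j ∈ A ∩ B, w j = ∑ j ∈ A ∪ B, w j := by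
    rw [h1]
    exact Finset.sum_sdiff (Finset.inter_subset_union)
  have h3 : (∑ j ∈ A ∪ B, w j) + ∑ j ∈ A ∩ B, w j = (∑ j ∈ A, w j) + ∑ j ∈ B, w j :=
    Finset.sum_union_inter
  calc ∑ j ∈ symmDiff A B, w j
      = (∑ j ∈ symmDiff A B, w j) + ((∑ j ∈ A ∩ B, w j) + ∑ j ∈ A ∩ B, w j) := by
        rw [chain_add_self, add_zero]
    _ = ((∑ j ∈ symmDiff A B, w j) + ∑ j ∈ A ∩ B, w j) + ∑ j ∈ A ∩ B, w j := by
        rw [add_assoc]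
    _ = (∑ j ∈ A, w j) + ∑ j ∈ B, w j := by rw [h2, h3]

/-- if `b ≺ b'` with `b' < b`, `W`, `W'` generate representatives for
`[b,i]`, `[b',i]`, and the wires of `W` before `b` form a boundary bundle alive till
`b`, then for `b' ≤ α < b` the cycle generated by `W ⊞ W'` at `α` is homologous in
`K_α` to the one generated by `W'`, and `W ⊞ W'` generates a representative for `[b',i]`. -/
theorem stmt12 (m i b b' : ℕ) (F : ZZ m) (w : ℕ → Chain) (W W' : Finset ℕ)
    (hprec : Prec F i b b') (hbb' : b' < b)
    (hwires : ∀ j ∈ W ∪ W', IsWire F j (w j))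
    (hW : IsHRep F i b i (psum w W) ∨ IsBRep F i b i (psum w W))
    (hW' : IsHRep F i b' i (psum w W'))
    (halive : AliveTill F w (W.filter (· < b)) b) :
    (∀ α, b' ≤ α → α < b →
      psum w (symmDiff W W') α + psum w W' α ∈ bdriesOf (F.K α)) ∧
    IsHRep F i b' i (psum w (symmDiff W W')) := by
  classical
  obtain ⟨h1b', hb'i, -, him, hcyc', hadj', hbirth', -⟩ := hW'
  have hbi : b ≤ i := by rcases hW with h | h <;> exact h.2.1
  have h1b : 1 ≤ b := by omega
  -- the bundle W gives boundaries before b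
  have hWlt : ∀ α, α < b → psum w W α ∈ bdriesOf (F.K α) := fun α h => by
    rw [psum_filter_lt w W h]
    exact halive α (le_of_lt h)
  -- cycles of the partial sums of W for α ≥ b
  have hWcyc : ∀ α, b ≤ α → α ≤ i → psum w W α ∈ cyclesOf (F.K α) := by
    intro α h1 h2
    rcases hW with h | h
    · exact h.2.2.2.2.1 α h1 h2
    · exact bdriesOf_le_cyclesOf (F.cpx α) (h.2.2.2.2.1 α h1 h2)
  -- adjacency of the partial sums of W for α ≥ b
  have hWadj : ∀ α, b ≤ α → α < i →
      (F.K α ⊆ F.K (α+1) → psum w W α + psum w W (α+1) ∈ bdriesOf (F.K (α+1))) ∧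
      (F.K (α+1) ⊆ F.K α → psum w W α + psum w W (α+1) ∈ bdriesOf (F.K α)) := by
    intro α h1 h2
    rcases hW with h | h
    · exact h.2.2.2.2.2.1 α h1 h2
    · have hc := h.2.2.2.2.2.1 α h1 h2
      constructor <;> intro _ <;> rw [hc, chain_add_self] <;> exact Submodule.zero_mem _
  -- key facts at the transition b-1 → b
  have keyF : F.K (b-1) ⊆ F.K b → psum w W b ∈ bdriesOf (F.K b) := by
    intro hf
    rcases hW with h | h
    · rcases hprec with ⟨hBb, -⟩ | ⟨-, -, hlt⟩ | ⟨-, -, hlt, -⟩ | ⟨-, -, -, hback⟩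
      · exfalso
        obtain ⟨-, -, -, hsub, hBne⟩ := hBb
        have hb1m : b - 1 < m := by omega
        have hb1 : b - 1 + 1 = b := by omega
        obtain ⟨σ, hσ, hins⟩ := step_insert F hb1m (by rw [hb1]; exact hsub)
        rw [hb1] at hins
        have hBσ : bdrySimplex σ ∉ bdriesOf (F.K (b-1)) := by
          intro hmem
          exact hBne (le_antisymm (bdriesOf_mono hsub)
            (by rw [hins]; exact bdries_insert_le hmem))
        have hzb : psum w W b ∈ cyclesOf (F.K b) := h.2.2.2.2.1 b le_rfl hbi
        rw [hins] at hzb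
        exact h.2.2.2.2.2.2.1.1 hf (cycles_insert_eq hBσ hzb)
      · omega
      · omega
      · have heq : F.K (b-1) = F.K b := Finset.Subset.antisymm hf hback
        have hm := (h.2.2.2.2.2.2.1.2 hback).1
        rwa [heq] at hm
    · exact h.2.2.2.2.1 b le_rfl hbi
  have keyB : F.K b ⊆ F.K (b-1) → psum w W b ∈ bdriesOf (F.K (b-1)) := by
    intro hback
    rcases hW with h | h
    · rcases hprec with ⟨hBb, -⟩ | ⟨-, -, hlt⟩ | ⟨-, -, hlt, -⟩ | ⟨-, -, -, -⟩
      · obtain ⟨-, -, -, hsub, hBne⟩ := hBb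
        exact absurd (congrArg bdriesOf (Finset.Subset.antisymm hsub hback)) hBne
      · omega
      · omega
      · exact (h.2.2.2.2.2.2.1.2 hback).1
    · obtain ⟨hsub', hnot⟩ := h.2.2.2.2.2.2.1
      have heq : F.K (b-1) = F.K b := Finset.Subset.antisymm hsub' hback
      exact absurd (by rw [heq]; exact h.2.2.2.2.1 b le_rfl hbi) hnot
  -- first conclusion
  have main1 : ∀ α, b' ≤ α → α < b →
      psum w (symmDiff W W') α + psum w W' α ∈ bdriesOf (F.K α) := by
    intro α _ hαb
    rw [psum_symmDiff, add_assoc, chain_add_self, add_zero]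
    exact hWlt α hαb
  refine ⟨main1, h1b', hb'i, le_rfl, him, ?_, ?_, ?_, ?_⟩
  · -- cycles
    intro α h1 h2
    rw [psum_symmDiff]
    refine Submodule.add_mem _ ?_ (hcyc' α h1 h2)
    by_cases hαb : α < b
    · exact bdriesOf_le_cyclesOf (F.cpx α) (hWlt α hαb)
    · exact hWcyc α (by omega) h2
  · -- adjacency
    intro α h1 h2
    have e : psum w (symmDiff W W') α + psum w (symmDiff W W') (α+1)
        = (psum w W' α + psum w W' (α+1)) + (psum w W α + psum w W (α+1)) := by
      rw [psum_symmDiff, psum_symmDiff]; abel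
    constructor
    · intro hf
      rw [e]
      refine Submodule.add_mem _ ((hadj' α h1 h2).1 hf) ?_
      by_cases hc : α + 1 < b
      · exact Submodule.add_mem _ (bdriesOf_mono hf (hWlt α (by omega))) (hWlt _ hc)
      · by_cases hc2 : α + 1 = b
        · refine Submodule.add_mem _ (bdriesOf_mono hf (hWlt α (by omega))) ?_
          have hf' : F.K (b - 1) ⊆ F.K b := by
            have hα : b - 1 = α := by omega
            rw [hα, ← hc2]; exact hf
          rw [hc2]
          exact keyF hf'
        · exact (hWadj α (by omega) h2).1 hf
    · intro hb
      rw [e]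
      refine Submodule.add_mem _ ((hadj' α h1 h2).2 hb) ?_
      by_cases hc : α + 1 < b
      · exact Submodule.add_mem _ (hWlt α (by omega)) (bdriesOf_mono hb (hWlt _ hc))
      · by_cases hc2 : α + 1 = b
        · refine Submodule.add_mem _ (hWlt α (by omega)) ?_
          have hb2 : F.K b ⊆ F.K (b - 1) := by
            have hα : b - 1 = α := by omega
            rw [hα, ← hc2]; exact hb
          have hm := keyB hb2
          rw [hc2, show α = b - 1 by omega]
          exact hm
        · exact (hWadj α (by omega) h2).2 hb
  · -- birth conditions at b'
    constructor
    · intro hf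
      have hz' : psum w W' b' ∉ cyclesOf (F.K (b'-1)) := hbirth'.1 hf
      have hz'cyc : psum w W' b' ∈ cyclesOf (F.K b') := hcyc' b' le_rfl hb'i
      have hb1m : b' - 1 < m := by omega
      have hb1 : b' - 1 + 1 = b' := by omega
      obtain ⟨σ, hσ, hins⟩ := step_insert F hb1m (by rw [hb1]; exact hf)
      rw [hb1] at hins
      have hWb' : psum w W b' ∈ bdriesOf (F.K b') := hWlt b' hbb'
      have hc1 : (psum w W b') σ = 0 := by
        rw [hins] at hWb'
        exact bdries_coeff_zero (F.cpx (b'-1)) hσ hWb'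
      have hc2 : (psum w W' b') σ ≠ 0 := by
        intro h0
        exact hz' (mem_cyclesOf_of_coeff_zero (by rwa [hins] at hz'cyc) h0)
      intro hmem
      have hzn : (psum w (symmDiff W W') b') σ = 0 :=
        coeff_zero_of_mem_chainsOf hσ hmem.1
      rw [psum_symmDiff, Finsupp.add_apply, hc1, zero_add] at hzn
      exact hc2 hzn
    · intro hb
      obtain ⟨hmem', hnot'⟩ := hbirth'.2 hb
      have hWb' : psum w W b' ∈ bdriesOf (F.K b') := hWlt b' hbb'
      constructor
      · rw [psum_symmDiff]
        exact Submodule.add_mem _ (bdriesOf_mono hb hWb') hmem'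
      · intro hmem
        have hadd := Submodule.add_mem _ hmem hWb'
        rw [psum_symmDiff, add_comm (psum w W b') (psum w W' b'), add_assoc,
          chain_add_self, add_zero] at hadd
        exact hnot' hadd
  · -- death condition (vacuous, d = i)
    intro h
    exact absurd h (lt_irrefl i)
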